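/- arXiv:1904.11019 — 3 statements merged into one kernel-verified Lean document; each statement's English description precedes it below -/
import Mathlib

section
/- Fix a period d > 0, an offset d₀ ∈ (0, d), and k ∈ (0, 2π/d), and take κ = 0, so that κ_n = 2πn/d, ζ₀ = k and ζ_n = i·√((2πn/d)² − k²) for n ≠ 0. Suppose b⁺, b⁻ ∈ ℂ are such that the symmetric partial sums −(i/d)·Σ_{n=−N}^{N} e^{+i κ_n d₀}/ζ_n and −(i/d)·Σ_{n=−N}^{N} e^{−i κ_n d₀}/ζ_n converge to b⁺ and b⁻ respectively as N → ∞. Then b⁺ = b⁻, and b⁺ + i/(d·k) is a real number. -/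
open Real Filter Topology

/-- `κ_n = κ + 2πn/d`. -/
noncomputable def kapN (d κ : ℝ) (n : ℤ) : ℝ := κ + 2 * π * n / d

/-- `ζ₀ = √(k² − κ²)` and `ζ_n = i√(κ_n² − k²)` for `n ≠ 0`. -/
noncomputable def zetaN (d k κ : ℝ) (n : ℤ) : ℂ :=
  if n = 0 then ((Real.sqrt (k ^ 2 - κ ^ 2) : ℝ) : ℂ)
  else Complex.I * ((Real.sqrt ((kapN d κ n) ^ 2 - k ^ 2) : ℝ) : ℂ)

/-- The diamond region `D₁ = {(κ,k) : |κ| < π/d, 0 < k < |κ + 2πn/d| ∀ n ≠ 0}`. -/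
def D1 (d : ℝ) : Set (ℝ × ℝ) :=
  {p : ℝ × ℝ | |p.1| < π / d ∧ 0 < p.2 ∧
    ∀ n : ℤ, n ≠ 0 → p.2 < |p.1 + 2 * π * n / d|}

/-- `β_e(k, κ, ε) = (1/π) log(2πε/d) + Σ_{n≠0} (1/(2π|n|) − i/(d ζ_n)) − i/(d ζ₀)`. -/
noncomputable def betaE (d k κ ε : ℝ) : ℂ :=
  ((1 / π * Real.log (2 * π * ε / d) : ℝ) : ℂ)
    + (∑' n : {n : ℤ // n ≠ 0},
        (((1 / (2 * π * |(n.1 : ℝ)|) : ℝ) : ℂ) - Complex.I / ((d : ℂ) * zetaN d k κ n.1)))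
    - Complex.I / ((d : ℂ) * zetaN d k κ 0)


lemma kapN_zero_neg (d : ℝ) (n : ℤ) : kapN d 0 (-n) = -kapN d 0 n := by
  simp [kapN]; push_cast; ring

lemma zetaN_zero_neg (d k : ℝ) (n : ℤ) : zetaN d k 0 (-n) = zetaN d k 0 n := by
  unfold zetaN
  rcases eq_or_ne n 0 with h | h
  · simp [h]
  · rw [if_neg (by simpa using h), if_neg h, kapN_zero_neg]
    ring_nf

/-- Fix `d > 0`, `d₀ ∈ (0,d)`, `k ∈ (0, 2π/d)` and take `κ = 0`.
If the symmetric partial sums `-(i/d) Σ_{n=-N}^N e^{±iκ_n d₀}/ζ_n` converge to `b⁺`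
resp. `b⁻`, then `b⁺ = b⁻` and `b⁺ + i/(dk)` is real. -/
theorem stmt_9 (d d₀ k : ℝ) (hd : 0 < d) (hd₀ : 0 < d₀) (hd₀' : d₀ < d)
    (hk0 : 0 < k) (hk1 : k < 2 * π / d) (bp bm : ℂ)
    (hbp : Tendsto (fun N : ℕ =>
        (-Complex.I / (d : ℂ)) * ∑ n ∈ Finset.Icc (-(N : ℤ)) (N : ℤ),
          Complex.exp (Complex.I * ((kapN d 0 n * d₀ : ℝ) : ℂ)) / zetaN d k 0 n)
      atTop (nhds bp))
    (hbm : Tendsto (fun N : ℕ =>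
        (-Complex.I / (d : ℂ)) * ∑ n ∈ Finset.Icc (-(N : ℤ)) (N : ℤ),
          Complex.exp (-(Complex.I * ((kapN d 0 n * d₀ : ℝ) : ℂ))) / zetaN d k 0 n)
      atTop (nhds bm)) :
    bp = bm ∧ (bp + Complex.I / ((d : ℂ) * (k : ℂ))).im = 0 := by
  
  have hd' : (d:ℂ) ≠ 0 := by exact_mod_cast hd.ne'
  have hk' : (k:ℂ) ≠ 0 := by exact_mod_cast hk0.ne'
  -- the two partial-sum sequences coincide
  have hsum : ∀ N : ℕ,
      (∑ n ∈ Finset.Icc (-(N : ℤ)) (N : ℤ),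
        Complex.exp (-(Complex.I * ((kapN d 0 n * d₀ : ℝ) : ℂ))) / zetaN d k 0 n)
      = ∑ n ∈ Finset.Icc (-(N : ℤ)) (N : ℤ),
        Complex.exp (Complex.I * ((kapN d 0 n * d₀ : ℝ) : ℂ)) / zetaN d k 0 n := by
    intro N
    refine Finset.sum_equiv (Equiv.neg ℤ) (fun i => by simp [Finset.mem_Icc]; omega) ?_
    intro i _
    simp only [Equiv.neg_apply, zetaN_zero_neg, kapN_zero_neg]
    push_cast
    ring_nf
  have heq : bp = bm := by
    refine tendsto_nhds_unique hbp ?_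
    refine hbm.congr fun N => ?_
    rw [hsum N]
  refine ⟨heq, ?_⟩
  -- imaginary part of each partial sum
  set F : ℕ → ℂ := fun N =>
    (-Complex.I / (d : ℂ)) * ∑ n ∈ Finset.Icc (-(N : ℤ)) (N : ℤ),
      Complex.exp (Complex.I * ((kapN d 0 n * d₀ : ℝ) : ℂ)) / zetaN d k 0 n with hF
  have him : ∀ N : ℕ, (F N + Complex.I / ((d : ℂ) * (k : ℂ))).im = 0 := by
    intro N
    have h2 : 2 * F N = (-Complex.I / (d : ℂ)) * ∑ n ∈ Finset.Icc (-(N : ℤ)) (N : ℤ),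
        ((Complex.exp (Complex.I * ((kapN d 0 n * d₀ : ℝ) : ℂ))
          + Complex.exp (-(Complex.I * ((kapN d 0 n * d₀ : ℝ) : ℂ)))) / zetaN d k 0 n) := by
      have : 2 * F N = F N + F N := by ring
      rw [this]
      nth_rewrite 2 [hF]
      simp only
      rw [← hsum N, ← mul_add, ← Finset.sum_add_distrib]
      congr 1
      refine Finset.sum_congr rfl fun n _ => ?_
      rw [← add_div]
    -- imaginary part of each combined term
    have hterm : ∀ n ∈ Finset.Icc (-(N : ℤ)) (N : ℤ),
        ((-Complex.I / (d : ℂ)) * ((Complex.exp (Complex.I * ((kapN d 0 n * d₀ : ℝ) : ℂ))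
          + Complex.exp (-(Complex.I * ((kapN d 0 n * d₀ : ℝ) : ℂ)))) / zetaN d k 0 n)).im
        = if n = 0 then -2 / (d * k) else 0 := by
      intro n _
      have hcos : Complex.exp (Complex.I * ((kapN d 0 n * d₀ : ℝ) : ℂ))
          + Complex.exp (-(Complex.I * ((kapN d 0 n * d₀ : ℝ) : ℂ)))
          = ((2 * Real.cos (kapN d 0 n * d₀) : ℝ) : ℂ) := by
        push_cast
        rw [Complex.two_cos]
        ring_nf
      rw [hcos]
      rcases eq_or_ne n 0 with h | h
      · have hz : zetaN d k 0 0 = (k : ℂ) := by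
          simp [zetaN, Real.sqrt_sq hk0.le]
        have hc0 : kapN d 0 (0 : ℤ) * d₀ = 0 := by simp [kapN]
        rw [h, hz, hc0]
        have key : (-Complex.I / (d : ℂ)) * (((2 * Real.cos 0 : ℝ) : ℂ) / (k : ℂ))
            = ((-2 / (d * k) : ℝ) : ℂ) * Complex.I := by
          simp only [Real.cos_zero]
          push_cast
          field_simp
        rw [key]
        simp only [Complex.mul_im, Complex.ofReal_re, Complex.ofReal_im, Complex.I_re,
          Complex.I_im]
        simp
      · have hz : zetaN d k 0 n
            = Complex.I * ((Real.sqrt ((kapN d 0 n) ^ 2 - k ^ 2) : ℝ) : ℂ) := by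
          simp [zetaN, h]
        rw [hz, if_neg h, ← Complex.conj_eq_iff_im]
        rw [map_mul, map_div₀, map_div₀, map_mul]
        simp only [map_neg, Complex.conj_I, Complex.conj_ofReal, neg_neg, neg_mul, div_neg]
        ring
    have h2' : 2 * F N = ∑ n ∈ Finset.Icc (-(N : ℤ)) (N : ℤ),
        (-Complex.I / (d : ℂ)) * ((Complex.exp (Complex.I * ((kapN d 0 n * d₀ : ℝ) : ℂ))
          + Complex.exp (-(Complex.I * ((kapN d 0 n * d₀ : ℝ) : ℂ)))) / zetaN d k 0 n) := by
      rw [h2, Finset.mul_sum]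
    have h2im : (2 * F N).im = -2 / (d * k) := by
      rw [h2', Complex.im_sum, Finset.sum_congr rfl hterm, Finset.sum_ite_eq' _ (0 : ℤ)]
      rw [if_pos (by simp [Finset.mem_Icc])]
    have h2im' : (2 * F N).im = 2 * (F N).im := by
      simp [Complex.mul_im]
    have hFim : (F N).im = -(1 / (d * k)) := by
      rw [h2im'] at h2im
      field_simp at h2im ⊢
      linarith
    have hIdk : (Complex.I / ((d : ℂ) * (k : ℂ))).im = 1 / (d * k) := by
      have : Complex.I / ((d : ℂ) * (k : ℂ)) = ((1 / (d * k) : ℝ) : ℂ) * Complex.I := by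
        push_cast
        field_simp
      rw [this]
      simp
    rw [Complex.add_im, hFim, hIdk]
    ring
  -- pass to the limit
  have hcont : Tendsto (fun N => (F N + Complex.I / ((d : ℂ) * (k : ℂ))).im) atTop
      (nhds ((bp + Complex.I / ((d : ℂ) * (k : ℂ))).im)) := by
    exact (Complex.continuous_im.tendsto _).comp (hbp.add_const _)
  have : Tendsto (fun _ : ℕ => (0 : ℝ)) atTop
      (nhds ((bp + Complex.I / ((d : ℂ) * (k : ℂ))).im)) := by
    refine hcont.congr fun N => him N
  exact tendsto_nhds_unique this tendsto_const_nhds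
end

section
/- Fix a period d > 0, an offset d₀ ∈ (0, d), ε > 0, and (κ, k) ∈ D₁. Suppose b⁺, b⁻ ∈ ℂ are such that the symmetric partial sums −(i/d)·Σ_{n=−N}^{N} e^{+i κ_n d₀}/ζ_n and −(i/d)·Σ_{n=−N}^{N} e^{−i κ_n d₀}/ζ_n converge to b⁺ and b⁻ respectively as N → ∞. Then Im β_e(k, κ, ε) − (1/2)·Im(b⁺ + b⁻) = (cos(κ d₀) − 1)/(d·ζ₀); in particular Im β_e(k, κ, ε) = −1/(d·ζ₀), independently of ε. -/
open Real Filter Topology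

lemma I_div_I_mul (c : ℝ) :
    Complex.I / (Complex.I * (c : ℂ)) = ((c⁻¹ : ℝ) : ℂ) := by
  rw [div_eq_mul_inv, mul_inv, ← mul_assoc,
    mul_inv_cancel₀ Complex.I_ne_zero, one_mul, Complex.ofReal_inv]

lemma neg_I_mul_div_I_mul (a b : ℂ) :
    -Complex.I * a / (Complex.I * b) = -(a / b) := by
  rw [div_eq_mul_inv, mul_inv, div_eq_mul_inv]
  have h : -Complex.I * a * (Complex.I⁻¹ * b⁻¹)
      = -(Complex.I * Complex.I⁻¹) * (a * b⁻¹) := by ring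
  rw [h, mul_inv_cancel₀ Complex.I_ne_zero]
  ring

/-- `i/(d ζ_n)` for `n ≠ 0` is the real number `1/(d √(κ_n²−k²))`. -/
lemma I_div_zeta_ne (d k κ : ℝ) (n : ℤ) (hn : n ≠ 0) :
    Complex.I / ((d : ℂ) * zetaN d k κ n)
      = (((d * Real.sqrt ((kapN d κ n) ^ 2 - k ^ 2))⁻¹ : ℝ) : ℂ) := by
  rw [zetaN, if_neg hn,
    show (d : ℂ) * (Complex.I * ((Real.sqrt ((kapN d κ n) ^ 2 - k ^ 2) : ℝ) : ℂ))
        = Complex.I * ((d * Real.sqrt ((kapN d κ n) ^ 2 - k ^ 2) : ℝ) : ℂ) by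
      push_cast; ring,
    I_div_I_mul]

lemma I_div_zeta_zero (d k κ : ℝ) :
    Complex.I / ((d : ℂ) * zetaN d k κ 0)
      = Complex.I * (((d * Real.sqrt (k ^ 2 - κ ^ 2))⁻¹ : ℝ) : ℂ) := by
  rw [zetaN, if_pos rfl,
    show (d : ℂ) * ((Real.sqrt (k ^ 2 - κ ^ 2) : ℝ) : ℂ)
        = ((d * Real.sqrt (k ^ 2 - κ ^ 2) : ℝ) : ℂ) by push_cast; ring,
    div_eq_mul_inv, Complex.ofReal_inv]

lemma betaE_im (d k κ ε : ℝ) :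
    (betaE d k κ ε).im = -(d * Real.sqrt (k ^ 2 - κ ^ 2))⁻¹ := by
  have hts : (∑' n : {n : ℤ // n ≠ 0},
      (((1 / (2 * π * |(n.1 : ℝ)|) : ℝ) : ℂ) - Complex.I / ((d : ℂ) * zetaN d k κ n.1)))
      = ((∑' n : {n : ℤ // n ≠ 0},
          (1 / (2 * π * |(n.1 : ℝ)|) - (d * Real.sqrt ((kapN d κ n.1) ^ 2 - k ^ 2))⁻¹) : ℝ) : ℂ) := by
    rw [Complex.ofReal_tsum]
    refine tsum_congr fun n => ?_
    rw [I_div_zeta_ne d k κ n.1 n.2]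
    push_cast
    ring
  rw [betaE, hts, I_div_zeta_zero]
  simp

/-- Fix `d > 0`, `d₀ ∈ (0,d)`, `ε > 0` and `(κ,k) ∈ D₁`. If the
symmetric partial sums `-(i/d) Σ_{n=-N}^N e^{±iκ_n d₀}/ζ_n` converge to `b⁺` resp.
`b⁻`, then `Im β_e(k,κ,ε) − (1/2)Im(b⁺+b⁻) = (cos(κd₀) − 1)/(dζ₀)`; in particular
`Im β_e(k,κ,ε) = −1/(dζ₀)`, independently of `ε`. -/
theorem stmt_11 (d d₀ ε κ k : ℝ) (hd : 0 < d) (hd₀ : 0 < d₀) (hd₀' : d₀ < d)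
    (hε : 0 < ε) (hD : (κ, k) ∈ D1 d) (bp bm : ℂ)
    (hbp : Tendsto (fun N : ℕ =>
        (-Complex.I / (d : ℂ)) * ∑ n ∈ Finset.Icc (-(N : ℤ)) (N : ℤ),
          Complex.exp (Complex.I * ((kapN d κ n * d₀ : ℝ) : ℂ)) / zetaN d k κ n)
      atTop (nhds bp))
    (hbm : Tendsto (fun N : ℕ =>
        (-Complex.I / (d : ℂ)) * ∑ n ∈ Finset.Icc (-(N : ℤ)) (N : ℤ),
          Complex.exp (-(Complex.I * ((kapN d κ n * d₀ : ℝ) : ℂ))) / zetaN d k κ n)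
      atTop (nhds bm)) :
    (betaE d k κ ε).im - (1 / 2) * (bp + bm).im
        = (Real.cos (κ * d₀) - 1) / (d * Real.sqrt (k ^ 2 - κ ^ 2)) ∧
      (betaE d k κ ε).im = -1 / (d * Real.sqrt (k ^ 2 - κ ^ 2)) := by
  set r := Real.sqrt (k ^ 2 - κ ^ 2) with hr
  -- the imaginary part of each symmetric partial sum of `b⁺ + b⁻` is constant
  have hconst : ∀ N : ℕ,
      (((-Complex.I / (d : ℂ)) * ∑ n ∈ Finset.Icc (-(N : ℤ)) (N : ℤ),
          Complex.exp (Complex.I * ((kapN d κ n * d₀ : ℝ) : ℂ)) / zetaN d k κ n)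
        + ((-Complex.I / (d : ℂ)) * ∑ n ∈ Finset.Icc (-(N : ℤ)) (N : ℤ),
          Complex.exp (-(Complex.I * ((kapN d κ n * d₀ : ℝ) : ℂ))) / zetaN d k κ n)).im
      = -(2 * Real.cos (κ * d₀)) * (d * r)⁻¹ := by
    intro N
    rw [← mul_add, ← Finset.sum_add_distrib, Finset.mul_sum, Complex.im_sum]
    have h2 : ∀ n : ℤ, Complex.exp (Complex.I * ((kapN d κ n * d₀ : ℝ) : ℂ))
          + Complex.exp (-(Complex.I * ((kapN d κ n * d₀ : ℝ) : ℂ)))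
        = ((2 * Real.cos (kapN d κ n * d₀) : ℝ) : ℂ) := by
      intro n
      push_cast
      rw [Complex.cos]
      ring_nf
    have hsum_eq : ∀ n ∈ Finset.Icc (-(N : ℤ)) (N : ℤ),
        ((-Complex.I / (d : ℂ)) *
          (Complex.exp (Complex.I * ((kapN d κ n * d₀ : ℝ) : ℂ)) / zetaN d k κ n
            + Complex.exp (-(Complex.I * ((kapN d κ n * d₀ : ℝ) : ℂ))) / zetaN d k κ n)).im
        = if n = 0 then -(2 * Real.cos (κ * d₀)) * (d * r)⁻¹ else 0 := by
      intro n _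
      rw [← add_div, h2 n]
      rcases eq_or_ne n 0 with h0 | h0
      · subst h0
        rw [if_pos rfl]
        have hk : kapN d κ 0 = κ := by simp [kapN]
        rw [hk, zetaN, if_pos rfl, ← hr]
        have : -Complex.I / (d : ℂ) * (((2 * Real.cos (κ * d₀) : ℝ) : ℂ) / ((r : ℝ) : ℂ))
            = Complex.I * ((-(2 * Real.cos (κ * d₀)) * (d * r)⁻¹ : ℝ) : ℂ) := by
          push_cast
          rw [mul_inv]
          field_simp
        rw [this]
        simp only [Complex.mul_im, Complex.I_re, Complex.I_im, Complex.ofReal_re,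
          Complex.ofReal_im]
        ring
      · rw [if_neg h0, zetaN, if_neg h0]
        have : -Complex.I / (d : ℂ) * (((2 * Real.cos (kapN d κ n * d₀) : ℝ) : ℂ)
              / (Complex.I * ((Real.sqrt ((kapN d κ n) ^ 2 - k ^ 2) : ℝ) : ℂ)))
            = ((-(2 * Real.cos (kapN d κ n * d₀) / d
                / Real.sqrt ((kapN d κ n) ^ 2 - k ^ 2)) : ℝ) : ℂ) := by
          rw [div_mul_div_comm,
            show (d : ℂ) * (Complex.I * ((Real.sqrt ((kapN d κ n) ^ 2 - k ^ 2) : ℝ) : ℂ))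
              = Complex.I * ((d : ℂ) * ((Real.sqrt ((kapN d κ n) ^ 2 - k ^ 2) : ℝ) : ℂ)) from by
              ring,
            neg_I_mul_div_I_mul]
          push_cast
          ring
        rw [this, Complex.ofReal_im]
    rw [Finset.sum_congr rfl hsum_eq, Finset.sum_ite_eq' (Finset.Icc (-(N:ℤ)) (N:ℤ)) 0
      (fun _ => -(2 * Real.cos (κ * d₀)) * (d * r)⁻¹)]
    rw [if_pos (by simp : (0:ℤ) ∈ Finset.Icc (-(N:ℤ)) (N:ℤ))]
  -- limit of the constant sequence
  have him : (bp + bm).im = -(2 * Real.cos (κ * d₀)) * (d * r)⁻¹ := by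
    have h1 : Tendsto (fun N : ℕ =>
        (((-Complex.I / (d : ℂ)) * ∑ n ∈ Finset.Icc (-(N : ℤ)) (N : ℤ),
            Complex.exp (Complex.I * ((kapN d κ n * d₀ : ℝ) : ℂ)) / zetaN d k κ n)
          + ((-Complex.I / (d : ℂ)) * ∑ n ∈ Finset.Icc (-(N : ℤ)) (N : ℤ),
            Complex.exp (-(Complex.I * ((kapN d κ n * d₀ : ℝ) : ℂ))) / zetaN d k κ n)).im)
        atTop (nhds ((bp + bm).im)) :=
      (Complex.continuous_im.tendsto _).comp (hbp.add hbm)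
    exact tendsto_nhds_unique (by simpa only [hconst] using h1) tendsto_const_nhds
  have hbeta := betaE_im d k κ ε
  rw [← hr] at hbeta
  constructor
  · rw [hbeta, him]; ring
  · rw [hbeta]; ring
end

section
/- Fix a period d > 0, an offset d₀ ∈ (0, d), and k ∈ (0, 2π/d). There exist δ > 0 and C > 0 such that for every κ ∈ ℝ with |κ| ≤ δ (so that (κ, k) ∈ D₁): the symmetric partial sums −(i/d)·Σ_{n=−N}^{N} e^{+i κ_n d₀}/ζ_n and −(i/d)·Σ_{n=−N}^{N} e^{−i κ_n d₀}/ζ_n converge as N → ∞ to limits b⁺(κ) and b⁻(κ) respectively, and |b⁺(κ) − b⁻(κ)| ≤ C·|κ|. -/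
set_option maxHeartbeats 1000000

open Real Filter Topology

noncomputable def aa (c k κ : ℝ) (n : ℕ) : ℝ := Real.sqrt ((κ + c * ((n : ℝ) + 1)) ^ 2 - k ^ 2)
noncomputable def rr (c k κ : ℝ) (n : ℕ) : ℝ := 1 / aa c k κ n - 1 / (c * ((n : ℝ) + 1))

noncomputable def uu (c d₀ k κ : ℝ) (i : ℕ) : ℂ :=
  Complex.exp (Complex.I * ((c * d₀ : ℝ) : ℂ)) ^ (i + 1) * ((rr c k κ i : ℝ) : ℂ)
    + (Complex.exp (Complex.I * ((c * d₀ : ℝ) : ℂ)))⁻¹ ^ (i + 1) * ((rr c k (-κ) i : ℝ) : ℂ)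

noncomputable def GG (c d₀ k : ℝ) (M : ℂ) (κ : ℝ) : ℂ :=
  Complex.exp (Complex.I * ((κ * d₀ : ℝ) : ℂ)) / ((Real.sqrt (k ^ 2 - κ ^ 2) : ℝ) : ℂ)
    + -Complex.I * Complex.exp (Complex.I * ((κ * d₀ : ℝ) : ℂ)) * (M + ∑' i, uu c d₀ k κ i)

lemma sum_Icc_decomp (f : ℤ → ℂ) (N : ℕ) :
    ∑ n ∈ Finset.Icc (-(N : ℤ)) (N : ℤ), f n
      = f 0 + ∑ i ∈ Finset.range N, (f (i + 1) + f (-(i + 1))) := by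
  induction N with
  | zero => simp
  | succ N ih =>
    have h1 : Finset.Icc (-(N + 1 : ℤ)) (N + 1 : ℤ)
        = insert (-(N + 1 : ℤ)) (insert ((N + 1 : ℤ)) (Finset.Icc (-(N : ℤ)) (N : ℤ))) := by
      ext x; simp only [Finset.mem_Icc, Finset.mem_insert]; omega
    have h2 : (-(N + 1 : ℤ)) ∉ insert ((N + 1 : ℤ)) (Finset.Icc (-(N : ℤ)) (N : ℤ)) := by
      simp only [Finset.mem_Icc, Finset.mem_insert]; omega
    have h3 : ((N + 1 : ℤ)) ∉ Finset.Icc (-(N : ℤ)) (N : ℤ) := by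
      simp only [Finset.mem_Icc]; omega
    push_cast
    rw [h1, Finset.sum_insert h2, Finset.sum_insert h3, ih, Finset.sum_range_succ]
    push_cast
    ring


lemma arg_lb {c k κ : ℝ} (hc : 0 < c) (hk : 0 < k) (hkc : k < c)
    (hκ : |κ| ≤ min (k / 2) ((c - k) / 2)) (n : ℕ) :
    (c - k) / 2 * c / 2 * ((n : ℝ) + 1) ^ 2 ≤ (κ + c * ((n : ℝ) + 1)) ^ 2 - k ^ 2 := by
  obtain ⟨h1, h2⟩ := abs_le.mp hκ
  have hδ1 : -(k / 2) ≤ κ := by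
    have := min_le_left (k / 2) ((c - k) / 2); linarith
  have hδ2 : -((c - k) / 2) ≤ κ := by
    have := min_le_right (k / 2) ((c - k) / 2); linarith
  have hs : (1 : ℝ) ≤ (n : ℝ) + 1 := by
    have : (0 : ℝ) ≤ (n : ℝ) := Nat.cast_nonneg n
    linarith
  set s : ℝ := (n : ℝ) + 1 with hsdef
  set t : ℝ := κ + c * s with htdef
  set m : ℝ := (c - k) / 2 with hmdef
  have h4 : m * s ≤ t - k := by
    have hcm : 0 ≤ c - m := by simp only [hmdef]; linarith
    nlinarith [mul_le_mul_of_nonneg_left (by linarith : (0:ℝ) ≤ s - 1) hcm]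
  have h5 : c * s / 2 ≤ t + k := by
    nlinarith [mul_le_mul_of_nonneg_left (by linarith : (1:ℝ) ≤ s) (le_of_lt hc)]
  have h6 : (0:ℝ) ≤ m * s := by
    have : 0 ≤ m := by simp only [hmdef]; linarith
    positivity
  have h7 := mul_le_mul h4 h5 (by positivity) (by linarith)
  nlinarith [h7]

lemma aa_lb {c k κ : ℝ} (hc : 0 < c) (hk : 0 < k) (hkc : k < c)
    (hκ : |κ| ≤ min (k / 2) ((c - k) / 2)) (n : ℕ) :
    Real.sqrt ((c - k) / 2 * c / 2) * ((n : ℝ) + 1) ≤ aa c k κ n := by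
  have h := arg_lb hc hk hkc hκ n
  have hs : (0 : ℝ) ≤ (n : ℝ) + 1 := by positivity
  have hm0 : (0:ℝ) ≤ (c - k) / 2 * c / 2 := by nlinarith
  have : Real.sqrt ((c - k) / 2 * c / 2) * ((n : ℝ) + 1)
      = Real.sqrt ((c - k) / 2 * c / 2 * ((n : ℝ) + 1) ^ 2) := by
    rw [Real.sqrt_mul hm0, Real.sqrt_sq hs]
  rw [this]
  exact Real.sqrt_le_sqrt h

lemma aa_sq {c k κ : ℝ} (hc : 0 < c) (hk : 0 < k) (hkc : k < c)
    (hκ : |κ| ≤ min (k / 2) ((c - k) / 2)) (n : ℕ) :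
    (aa c k κ n) ^ 2 = (κ + c * ((n : ℝ) + 1)) ^ 2 - k ^ 2 := by
  have h := arg_lb hc hk hkc hκ n
  have hm0 : (0:ℝ) ≤ (c - k) / 2 * c / 2 * ((n : ℝ) + 1) ^ 2 := by
    have : (0:ℝ) ≤ (c - k) / 2 * c / 2 := by nlinarith
    positivity
  exact Real.sq_sqrt (by linarith)

lemma aa_pos {c k κ : ℝ} (hc : 0 < c) (hk : 0 < k) (hkc : k < c)
    (hκ : |κ| ≤ min (k / 2) ((c - k) / 2)) (n : ℕ) :
    0 < aa c k κ n := by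
  have h := aa_lb hc hk hkc hκ n
  have hm : (0:ℝ) < (c - k) / 2 * c / 2 := by nlinarith
  have : 0 < Real.sqrt ((c - k) / 2 * c / 2) * ((n : ℝ) + 1) :=
    mul_pos (Real.sqrt_pos.mpr hm) (by positivity)
  linarith

lemma rr_bound {c k κ : ℝ} (hc : 0 < c) (hk : 0 < k) (hkc : k < c)
    (hκ : |κ| ≤ min (k / 2) ((c - k) / 2)) (n : ℕ) :
    |rr c k κ n| ≤ (2 * k ^ 2 + c * k) / (Real.sqrt ((c - k) / 2 * c / 2) * c ^ 2)
      / ((n : ℝ) + 1) ^ 2 := by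
  set α := Real.sqrt ((c - k) / 2 * c / 2) with hα
  have hαpos : 0 < α := Real.sqrt_pos.mpr (by nlinarith)
  set s : ℝ := (n : ℝ) + 1 with hsdef
  have hs1 : (1 : ℝ) ≤ s := by
    have : (0 : ℝ) ≤ (n : ℝ) := Nat.cast_nonneg n
    simp only [hsdef]; linarith
  have hs0 : 0 < s := by linarith
  set a := aa c k κ n with hadef
  have ha2 : a ^ 2 = (κ + c * s) ^ 2 - k ^ 2 := aa_sq hc hk hkc hκ n
  have halb : α * s ≤ a := aa_lb hc hk hkc hκ n
  have hapos : 0 < a := aa_pos hc hk hkc hκ n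
  obtain ⟨hκ1, hκ2⟩ := abs_le.mp hκ
  have hmk : min (k / 2) ((c - k) / 2) ≤ k / 2 := min_le_left _ _
  set B : ℝ := 2 * k ^ 2 + c * k with hB
  have hBpos : 0 < B := by positivity
  have e1 : (c * s - a) * (c * s + a) = k ^ 2 - κ ^ 2 - 2 * c * s * κ := by
    linear_combination -ha2
  have hcs : (0:ℝ) ≤ 2 * c * s := by positivity
  have p1 : 2 * c * s * κ ≤ 2 * c * s * (k / 2) :=
    mul_le_mul_of_nonneg_left (le_trans hκ2 hmk) hcs
  have p2 : 2 * c * s * (-(k / 2)) ≤ 2 * c * s * κ := by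
    apply mul_le_mul_of_nonneg_left _ hcs
    have := min_le_left (k / 2) ((c - k) / 2); linarith
  have hκsq : κ ^ 2 ≤ k ^ 2 := by nlinarith [le_trans hκ2 hmk]
  have hk2s : k ^ 2 ≤ k ^ 2 * s := by nlinarith [sq_nonneg k]
  have habs : |k ^ 2 - κ ^ 2 - 2 * c * s * κ| ≤ B * s := by
    rw [abs_le, hB]
    constructor
    · nlinarith [p2, hκsq, mul_nonneg (sq_nonneg k) (le_of_lt hs0)]
    · nlinarith [p1, hκsq, hk2s]
  have h1 : |c * s - a| * (c * s + a) ≤ B * s := by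
    calc |c * s - a| * (c * s + a) = |(c * s - a) * (c * s + a)| := by
          rw [abs_mul, abs_of_pos (by positivity : 0 < c * s + a)]
      _ ≤ B * s := by rw [e1]; exact habs
  have h2 : |c * s - a| ≤ B / c := by
    rw [le_div_iff₀ hc]
    have h2' : |c * s - a| * c * s ≤ B * s := by
      calc |c * s - a| * c * s = |c * s - a| * (c * s) := by ring
        _ ≤ |c * s - a| * (c * s + a) :=
            mul_le_mul_of_nonneg_left (by linarith) (abs_nonneg _)
        _ ≤ B * s := h1
    exact le_of_mul_le_mul_right (by linarith [h2']) hs0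
  have h3 : rr c k κ n = (c * s - a) / (a * (c * s)) := by
    simp only [rr, ← hadef, ← hsdef]
    field_simp
  rw [h3, abs_div, abs_of_pos (by positivity : 0 < a * (c * s))]
  have hden : α * s * (c * s) ≤ a * (c * s) :=
    mul_le_mul_of_nonneg_right halb (by positivity)
  calc |c * s - a| / (a * (c * s)) ≤ (B / c) / (α * s * (c * s)) :=
        div_le_div₀ (by positivity) h2 (by positivity) hden
    _ = B / (c * (α * s * (c * s))) := div_div _ _ _
    _ = B / (α * c ^ 2) / s ^ 2 := by rw [div_div]; congr 1; ring

lemma rr_diff {c k κ : ℝ} (hc : 0 < c) (hk : 0 < k) (hkc : k < c)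
    (hκ : |κ| ≤ min (k / 2) ((c - k) / 2)) (n : ℕ) :
    |rr c k κ n - rr c k (-κ) n| ≤
      2 * c / (Real.sqrt ((c - k) / 2 * c / 2)) ^ 3 * |κ| / ((n : ℝ) + 1) ^ 2 := by
  set α := Real.sqrt ((c - k) / 2 * c / 2) with hα
  have hαpos : 0 < α := Real.sqrt_pos.mpr (by nlinarith)
  set s : ℝ := (n : ℝ) + 1 with hsdef
  have hs1 : (1 : ℝ) ≤ s := by
    have : (0 : ℝ) ≤ (n : ℝ) := Nat.cast_nonneg n
    simp only [hsdef]; linarith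
  have hs0 : 0 < s := by linarith
  have hκ' : |(-κ)| ≤ min (k / 2) ((c - k) / 2) := by rwa [abs_neg]
  set a := aa c k κ n with hadef
  set a' := aa c k (-κ) n with ha'def
  have ha2 : a ^ 2 = (κ + c * s) ^ 2 - k ^ 2 := aa_sq hc hk hkc hκ n
  have ha2' : a' ^ 2 = (-κ + c * s) ^ 2 - k ^ 2 := aa_sq hc hk hkc hκ' n
  have halb : α * s ≤ a := aa_lb hc hk hkc hκ n
  have halb' : α * s ≤ a' := aa_lb hc hk hkc hκ' n
  have hapos : 0 < a := aa_pos hc hk hkc hκ n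
  have hapos' : 0 < a' := aa_pos hc hk hkc hκ' n
  have e1 : (a' - a) * (a' + a) = -(4 * κ * c * s) := by linear_combination ha2' - ha2
  have h1 : |a' - a| * (a' + a) = 4 * |κ| * c * s := by
    calc |a' - a| * (a' + a) = |(a' - a) * (a' + a)| := by
          rw [abs_mul, abs_of_pos (by positivity : 0 < a' + a)]
      _ = |4 * κ * c * s| := by rw [e1, abs_neg]
      _ = 4 * |κ| * c * s := by
          rw [show (4 : ℝ) * κ * c * s = (4 * c * s) * κ by ring, abs_mul,
            abs_of_pos (by positivity : (0:ℝ) < 4 * c * s)]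
          ring
  have h2 : |a' - a| ≤ 2 * c * |κ| / α := by
    rw [le_div_iff₀ hαpos]
    have h2' : |a' - a| * (2 * α * s) ≤ 4 * |κ| * c * s := by
      calc |a' - a| * (2 * α * s) ≤ |a' - a| * (a' + a) :=
            mul_le_mul_of_nonneg_left (by linarith) (abs_nonneg _)
        _ ≤ 4 * |κ| * c * s := le_of_eq h1
    have := le_of_mul_le_mul_right (by linarith [h2'] : |a' - a| * (2 * α) * s ≤ (4 * |κ| * c) * s) hs0
    linarith
  have h3 : rr c k κ n - rr c k (-κ) n = (a' - a) / (a * a') := by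
    simp only [rr, ← hadef, ← ha'def]
    field_simp
    ring
  rw [h3, abs_div, abs_of_pos (by positivity : 0 < a * a')]
  have hden : (α * s) * (α * s) ≤ a * a' :=
    mul_le_mul halb halb' (by positivity) (by linarith)
  calc |a' - a| / (a * a') ≤ (2 * c * |κ| / α) / ((α * s) * (α * s)) :=
        div_le_div₀ (by positivity) h2 (by positivity) hden
    _ = (2 * c * |κ|) / (α * ((α * s) * (α * s))) := div_div _ _ _
    _ = 2 * c / α ^ 3 * |κ| / s ^ 2 := by
        rw [show 2 * c / α ^ 3 * |κ| = 2 * c * |κ| / α ^ 3 by ring, div_div]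
        congr 1; ring

lemma zetaN_neg (d k κ : ℝ) (n : ℤ) : zetaN d k κ n = zetaN d k (-κ) (-n) := by
  unfold zetaN
  rcases eq_or_ne n 0 with h | h
  · simp [h, neg_sq]
  · rw [if_neg h, if_neg (by omega : -n ≠ 0)]
    have : (kapN d κ n) ^ 2 = (kapN d (-κ) (-n)) ^ 2 := by
      unfold kapN; push_cast; ring
    rw [this]

lemma minus_eq_plus (d d₀ k κ : ℝ) (N : ℕ) :
    ∑ n ∈ Finset.Icc (-(N : ℤ)) (N : ℤ),
        Complex.exp (-(Complex.I * ((kapN d κ n * d₀ : ℝ) : ℂ))) / zetaN d k κ n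
      = ∑ n ∈ Finset.Icc (-(N : ℤ)) (N : ℤ),
        Complex.exp (Complex.I * ((kapN d (-κ) n * d₀ : ℝ) : ℂ)) / zetaN d k (-κ) n := by
  apply Finset.sum_nbij' (fun n => -n) (fun n => -n)
  · intro a ha; simp only [Finset.mem_Icc] at *; omega
  · intro a ha; simp only [Finset.mem_Icc] at *; omega
  · intro a _; ring
  · intro a _; ring
  · intro n _
    have h1 : kapN d (-κ) (-n) = -(kapN d κ n) := by unfold kapN; push_cast; ring
    rw [h1, ← zetaN_neg]
    congr 1
    push_cast
    ring_nf

lemma exp_diff_bound (t : ℝ) :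
    ‖Complex.exp (Complex.I * (t : ℂ)) - Complex.exp (Complex.I * ((-t : ℝ) : ℂ))‖
      ≤ 2 * |t| := by
  have h1 : Complex.exp (Complex.I * (t : ℂ)) - Complex.exp (Complex.I * ((-t : ℝ) : ℂ))
      = (2 * Real.sin t : ℝ) * Complex.I := by
    push_cast
    rw [mul_comm Complex.I (t : ℂ), mul_comm Complex.I (-t : ℂ), Complex.exp_mul_I,
      Complex.exp_mul_I]
    push_cast [Complex.cos_neg, Complex.sin_neg]
    ring
  rw [h1, norm_mul, Complex.norm_I, mul_one, Complex.norm_real, Real.norm_eq_abs, abs_mul, abs_two]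
  have := Real.abs_sin_le_abs (x := t)
  linarith

lemma abs_exp_I_mul (x : ℝ) : ‖Complex.exp (Complex.I * (x : ℂ))‖ = 1 := by
  rw [mul_comm, Complex.norm_exp_ofReal_mul_I]

lemma summable_inv_sq : Summable (fun i : ℕ => 1 / ((i : ℝ) + 1) ^ 2) := by
  have h : Summable (fun n : ℕ => 1 / (n : ℝ) ^ 2) :=
    Real.summable_one_div_nat_pow.mpr one_lt_two
  have := (summable_nat_add_iff 1).mpr h
  refine this.congr fun n => ?_
  push_cast
  ring

lemma uu_norm {c k κ : ℝ} (d₀ : ℝ) (hc : 0 < c) (hk : 0 < k) (hkc : k < c)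
    (hκ : |κ| ≤ min (k / 2) ((c - k) / 2)) (i : ℕ) :
    ‖uu c d₀ k κ i‖ ≤ 2 * ((2 * k ^ 2 + c * k) / (Real.sqrt ((c - k) / 2 * c / 2) * c ^ 2))
      / ((i : ℝ) + 1) ^ 2 := by
  have hκ' : |(-κ)| ≤ min (k / 2) ((c - k) / 2) := by rwa [abs_neg]
  have hw : ‖Complex.exp (Complex.I * ((c * d₀ : ℝ) : ℂ))‖ = 1 := abs_exp_I_mul _
  have hwi : ‖(Complex.exp (Complex.I * ((c * d₀ : ℝ) : ℂ)))⁻¹‖ = 1 := by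
    rw [norm_inv, hw]; norm_num
  have h1 := rr_bound hc hk hkc hκ i
  have h2 := rr_bound hc hk hkc hκ' i
  calc ‖uu c d₀ k κ i‖
      ≤ ‖Complex.exp (Complex.I * ((c * d₀ : ℝ) : ℂ)) ^ (i + 1) * ((rr c k κ i : ℝ) : ℂ)‖
        + ‖(Complex.exp (Complex.I * ((c * d₀ : ℝ) : ℂ)))⁻¹ ^ (i + 1) * ((rr c k (-κ) i : ℝ) : ℂ)‖ :=
        norm_add_le _ _
    _ = |rr c k κ i| + |rr c k (-κ) i| := by
        rw [norm_mul, norm_mul, norm_pow, norm_pow, hw, hwi, one_pow, one_mul, one_mul,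
          Complex.norm_real, Complex.norm_real, Real.norm_eq_abs, Real.norm_eq_abs]
    _ ≤ 2 * ((2 * k ^ 2 + c * k) / (Real.sqrt ((c - k) / 2 * c / 2) * c ^ 2))
        / ((i : ℝ) + 1) ^ 2 := by
        have : 2 * ((2 * k ^ 2 + c * k) / (Real.sqrt ((c - k) / 2 * c / 2) * c ^ 2))
            / ((i : ℝ) + 1) ^ 2
            = (2 * k ^ 2 + c * k) / (Real.sqrt ((c - k) / 2 * c / 2) * c ^ 2) / ((i : ℝ) + 1) ^ 2
              + (2 * k ^ 2 + c * k) / (Real.sqrt ((c - k) / 2 * c / 2) * c ^ 2)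
                / ((i : ℝ) + 1) ^ 2 := by ring
        rw [this]
        exact add_le_add h1 h2

lemma uu_summable {c k κ : ℝ} (d₀ : ℝ) (hc : 0 < c) (hk : 0 < k) (hkc : k < c)
    (hκ : |κ| ≤ min (k / 2) ((c - k) / 2)) :
    Summable (uu c d₀ k κ) := by
  apply Summable.of_norm_bounded ?_ (uu_norm d₀ hc hk hkc hκ)
  simp_rw [div_eq_mul_one_div (2 * ((2 * k ^ 2 + c * k) / (Real.sqrt ((c - k) / 2 * c / 2) * c ^ 2)))]
  exact summable_inv_sq.mul_left _

lemma key_tendsto (d d₀ k : ℝ) (hd : 0 < d) (hk0 : 0 < k) (hk1 : k < 2 * π / d) (M : ℂ)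
    (hM : Tendsto (fun N : ℕ => ∑ i ∈ Finset.range N,
      ((Complex.exp (Complex.I * ((2 * π / d * d₀ : ℝ) : ℂ)) ^ (i + 1)
        + (Complex.exp (Complex.I * ((2 * π / d * d₀ : ℝ) : ℂ)))⁻¹ ^ (i + 1))
        * ((1 / (2 * π / d * ((i : ℝ) + 1)) : ℝ) : ℂ))) atTop (nhds M))
    (κ : ℝ) (hκ : |κ| ≤ min (k / 2) ((2 * π / d - k) / 2)) :
    Tendsto (fun N : ℕ => ∑ n ∈ Finset.Icc (-(N : ℤ)) (N : ℤ),
        Complex.exp (Complex.I * ((kapN d κ n * d₀ : ℝ) : ℂ)) / zetaN d k κ n) atTop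
      (nhds (GG (2 * π / d) d₀ k M κ)) := by
  have hπ := Real.pi_pos
  set c : ℝ := 2 * π / d with hcdef
  have hc : 0 < c := by positivity
  have hκ' : |(-κ)| ≤ min (k / 2) ((c - k) / 2) := by rwa [abs_neg]
  set w : ℂ := Complex.exp (Complex.I * ((c * d₀ : ℝ) : ℂ)) with hwdef
  set E : ℂ := Complex.exp (Complex.I * ((κ * d₀ : ℝ) : ℂ)) with hEdef
  set f : ℤ → ℂ := fun n =>
    Complex.exp (Complex.I * ((kapN d κ n * d₀ : ℝ) : ℂ)) / zetaN d k κ n with hfdef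
  -- pair identity
  have hpair : ∀ i : ℕ, f ((i : ℤ) + 1) + f (-((i : ℤ) + 1))
      = -Complex.I * E * ((w ^ (i + 1) + w⁻¹ ^ (i + 1)) * ((1 / (c * ((i : ℝ) + 1)) : ℝ) : ℂ))
        + -Complex.I * E * uu c d₀ k κ i := by
    intro i
    have hne : ((i : ℤ) + 1) ≠ 0 := by omega
    have hne' : (-((i : ℤ) + 1)) ≠ 0 := by omega
    have harg : (kapN d κ ((i : ℤ) + 1)) ^ 2 - k ^ 2 = (κ + c * ((i : ℝ) + 1)) ^ 2 - k ^ 2 := by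
      simp only [kapN, hcdef]; push_cast; ring
    have harg' : (kapN d κ (-((i : ℤ) + 1))) ^ 2 - k ^ 2
        = (-κ + c * ((i : ℝ) + 1)) ^ 2 - k ^ 2 := by
      simp only [kapN, hcdef]; push_cast; ring
    have hz1 : zetaN d k κ ((i : ℤ) + 1) = Complex.I * ((aa c k κ i : ℝ) : ℂ) := by
      simp only [zetaN, if_neg hne, aa, harg]
    have hz2 : zetaN d k κ (-((i : ℤ) + 1)) = Complex.I * ((aa c k (-κ) i : ℝ) : ℂ) := by
      simp only [zetaN, if_neg hne', aa, harg']
    have he1 : Complex.exp (Complex.I * ((kapN d κ ((i : ℤ) + 1) * d₀ : ℝ) : ℂ))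
        = E * w ^ (i + 1) := by
      have harg2 : Complex.I * ((kapN d κ ((i : ℤ) + 1) * d₀ : ℝ) : ℂ)
          = Complex.I * ((κ * d₀ : ℝ) : ℂ)
            + ((i + 1 : ℕ) : ℂ) * (Complex.I * ((c * d₀ : ℝ) : ℂ)) := by
        simp only [kapN, hcdef]; push_cast; ring
      rw [harg2, Complex.exp_add, Complex.exp_nat_mul, hEdef, hwdef]
    have he2 : Complex.exp (Complex.I * ((kapN d κ (-((i : ℤ) + 1)) * d₀ : ℝ) : ℂ))
        = E * w⁻¹ ^ (i + 1) := by
      have harg2 : Complex.I * ((kapN d κ (-((i : ℤ) + 1)) * d₀ : ℝ) : ℂ)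
          = Complex.I * ((κ * d₀ : ℝ) : ℂ)
            + ((i + 1 : ℕ) : ℂ) * (-(Complex.I * ((c * d₀ : ℝ) : ℂ))) := by
        simp only [kapN, hcdef]; push_cast; ring
      rw [harg2, Complex.exp_add, Complex.exp_nat_mul, Complex.exp_neg, hEdef, hwdef]
    have ha0 : ((aa c k κ i : ℝ) : ℂ) ≠ 0 := by
      exact_mod_cast (aa_pos hc hk0 hk1 hκ i).ne'
    have ha0' : ((aa c k (-κ) i : ℝ) : ℂ) ≠ 0 := by
      exact_mod_cast (aa_pos hc hk0 hk1 hκ' i).ne'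
    have hrr : ((rr c k κ i : ℝ) : ℂ)
        = 1 / ((aa c k κ i : ℝ) : ℂ) - 1 / ((c * ((i : ℝ) + 1) : ℝ) : ℂ) := by
      simp only [rr]; push_cast; ring
    have hrr' : ((rr c k (-κ) i : ℝ) : ℂ)
        = 1 / ((aa c k (-κ) i : ℝ) : ℂ) - 1 / ((c * ((i : ℝ) + 1) : ℝ) : ℂ) := by
      simp only [rr]; push_cast; ring
    simp only [hfdef, uu, ← hwdef]
    rw [he1, he2, hz1, hz2, hrr, hrr']
    have hq : ((1 / (c * ((i : ℝ) + 1)) : ℝ) : ℂ) = 1 / ((c * ((i : ℝ) + 1) : ℝ) : ℂ) := by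
      push_cast; ring
    rw [hq]
    rw [div_eq_mul_inv, div_eq_mul_inv, mul_inv, mul_inv, Complex.inv_I]
    ring
  -- zero term
  have hT0 : f 0 = E / ((Real.sqrt (k ^ 2 - κ ^ 2) : ℝ) : ℂ) := by
    have h1 : kapN d κ 0 * d₀ = κ * d₀ := by simp [kapN]
    have h2 : zetaN d k κ 0 = ((Real.sqrt (k ^ 2 - κ ^ 2) : ℝ) : ℂ) := by simp [zetaN]
    simp only [hfdef, h1, h2, hEdef]
  have hsum : Summable (uu c d₀ k κ) := uu_summable d₀ hc hk0 hk1 hκ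
  have hU : Tendsto (fun N : ℕ => ∑ i ∈ Finset.range N, uu c d₀ k κ i) atTop
      (nhds (∑' i, uu c d₀ k κ i)) := hsum.hasSum.tendsto_sum_nat
  have hfinal : Tendsto (fun N : ℕ => f 0 + -Complex.I * E
      * ((∑ i ∈ Finset.range N, ((w ^ (i + 1) + w⁻¹ ^ (i + 1))
          * ((1 / (c * ((i : ℝ) + 1)) : ℝ) : ℂ)))
        + ∑ i ∈ Finset.range N, uu c d₀ k κ i)) atTop
      (nhds (f 0 + -Complex.I * E * (M + ∑' i, uu c d₀ k κ i))) :=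
    tendsto_const_nhds.add ((hM.add hU).const_mul _)
  have hGG : GG c d₀ k M κ = f 0 + -Complex.I * E * (M + ∑' i, uu c d₀ k κ i) := by
    rw [GG, hT0, hEdef]
  rw [hGG]
  apply hfinal.congr
  intro N
  rw [sum_Icc_decomp f N]
  congr 1
  rw [mul_add, Finset.mul_sum, Finset.mul_sum, ← Finset.sum_add_distrib]
  exact Finset.sum_congr rfl fun i _ => (hpair i).symm

lemma GG_diff (c d₀ k : ℝ) (hc : 0 < c) (hd₀ : 0 < d₀) (hk0 : 0 < k) (hkc : k < c) (M : ℂ)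
    (κ : ℝ) (hκ : |κ| ≤ min (k / 2) ((c - k) / 2)) :
    ‖GG c d₀ k M κ - GG c d₀ k M (-κ)‖
      ≤ (2 * d₀ * ((Real.sqrt (k ^ 2 - (min (k / 2) ((c - k) / 2)) ^ 2))⁻¹ + ‖M‖
          + 2 * ((2 * k ^ 2 + c * k) / (Real.sqrt ((c - k) / 2 * c / 2) * c ^ 2))
            * (∑' i : ℕ, 1 / ((i : ℝ) + 1) ^ 2))
        + 2 * (2 * c / (Real.sqrt ((c - k) / 2 * c / 2)) ^ 3)
            * (∑' i : ℕ, 1 / ((i : ℝ) + 1) ^ 2)) * |κ| := by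
  have hκ' : |(-κ)| ≤ min (k / 2) ((c - k) / 2) := by rwa [abs_neg]
  set δ' : ℝ := min (k / 2) ((c - k) / 2) with hδdef
  have hδk : δ' < k := by
    have := min_le_left (k / 2) ((c - k) / 2); simp only [hδdef]; linarith
  have hδ0 : 0 ≤ δ' := le_trans (abs_nonneg κ) hκ
  set α : ℝ := Real.sqrt ((c - k) / 2 * c / 2) with hαdef
  set A : ℝ := (2 * k ^ 2 + c * k) / (α * c ^ 2) with hAdef
  set D : ℝ := 2 * c / α ^ 3 with hDdef
  set T : ℝ := ∑' i : ℕ, 1 / ((i : ℝ) + 1) ^ 2 with hTdef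
  have hαpos : 0 < α := Real.sqrt_pos.mpr (by nlinarith)
  have hApos : 0 ≤ A := by positivity
  have hDpos : 0 ≤ D := by positivity
  have hT0 : 0 ≤ T := tsum_nonneg fun i => by positivity
  set z0 : ℝ := Real.sqrt (k ^ 2 - δ' ^ 2) with hz0def
  have hz0pos : 0 < z0 := Real.sqrt_pos.mpr (by nlinarith)
  set E : ℂ := Complex.exp (Complex.I * ((κ * d₀ : ℝ) : ℂ)) with hEdef
  set E' : ℂ := Complex.exp (Complex.I * ((-κ * d₀ : ℝ) : ℂ)) with hE'def
  set U : ℂ := ∑' i, uu c d₀ k κ i with hUdef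
  set U' : ℂ := ∑' i, uu c d₀ k (-κ) i with hU'def
  set z : ℝ := Real.sqrt (k ^ 2 - κ ^ 2) with hzdef
  have hzpos : 0 < z := Real.sqrt_pos.mpr (by nlinarith [abs_le.mp hκ])
  have hzz0 : z0 ≤ z := by
    apply Real.sqrt_le_sqrt
    nlinarith [abs_le.mp hκ, abs_nonneg κ, sq_abs κ]
  -- decomposition of the difference
  have hdelta : GG c d₀ k M κ - GG c d₀ k M (-κ)
      = (E - E') * ((z : ℂ))⁻¹
        + -Complex.I * ((E - E') * M + (E - E') * U + E' * (U - U')) := by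
    have hsq : k ^ 2 - (-κ) ^ 2 = k ^ 2 - κ ^ 2 := by ring
    simp only [GG, hsq, ← hEdef, ← hE'def, ← hUdef, ← hU'def, ← hzdef]
    rw [div_eq_mul_inv, div_eq_mul_inv]
    ring
  rw [hdelta]
  -- bounds
  have habsE : ‖E - E'‖ ≤ 2 * d₀ * |κ| := by
    have := exp_diff_bound (κ * d₀)
    have hneg : ((-(κ * d₀) : ℝ) : ℂ) = ((-κ * d₀ : ℝ) : ℂ) := by push_cast; ring
    rw [hneg] at this
    calc ‖E - E'‖ ≤ 2 * |κ * d₀| := this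
      _ = 2 * d₀ * |κ| := by rw [abs_mul, abs_of_pos hd₀]; ring
  have hzinv : ‖(((z : ℝ) : ℂ))⁻¹‖ ≤ z0⁻¹ := by
    rw [norm_inv, Complex.norm_real, Real.norm_eq_abs, abs_of_pos hzpos, ← one_div, ← one_div]
    exact one_div_le_one_div_of_le hz0pos hzz0
  have hsummable_c : ∀ C : ℝ, Summable (fun i : ℕ => C / ((i : ℝ) + 1) ^ 2) := fun C =>
    (summable_inv_sq.mul_left C).congr (fun i => by ring)
  have hboundsum : Summable fun i : ℕ => 2 * A / ((i : ℝ) + 1) ^ 2 := hsummable_c _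
  have hsumn : Summable fun i => ‖uu c d₀ k κ i‖ :=
    Summable.of_nonneg_of_le (fun i => norm_nonneg _) (uu_norm d₀ hc hk0 hkc hκ) hboundsum
  have hUbound : ‖U‖ ≤ 2 * A * T := by
    calc ‖U‖ ≤ ∑' i, ‖uu c d₀ k κ i‖ := norm_tsum_le_tsum_norm hsumn
      _ ≤ ∑' i : ℕ, 2 * A / ((i : ℝ) + 1) ^ 2 :=
          Summable.tsum_le_tsum (uu_norm d₀ hc hk0 hkc hκ) hsumn hboundsum
      _ = 2 * A * T := by
          rw [hTdef, ← tsum_mul_left]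
          exact tsum_congr fun i => by ring
  have hUdiff : ‖U - U'‖ ≤ 2 * D * |κ| * T := by
    have hsum1 := uu_summable (κ := κ) d₀ hc hk0 hkc hκ
    have hsum2 := uu_summable (κ := -κ) d₀ hc hk0 hkc hκ'
    have hdiff_eq : ∀ i : ℕ, uu c d₀ k κ i - uu c d₀ k (-κ) i
        = (Complex.exp (Complex.I * ((c * d₀ : ℝ) : ℂ)) ^ (i + 1)
            - (Complex.exp (Complex.I * ((c * d₀ : ℝ) : ℂ)))⁻¹ ^ (i + 1))
          * (((rr c k κ i : ℝ) : ℂ) - ((rr c k (-κ) i : ℝ) : ℂ)) := by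
      intro i
      simp only [uu, neg_neg]
      ring
    have hterm : ∀ i : ℕ, ‖uu c d₀ k κ i - uu c d₀ k (-κ) i‖
        ≤ 2 * D * |κ| / ((i : ℝ) + 1) ^ 2 := by
      intro i
      rw [hdiff_eq i]
      have h1 : ‖Complex.exp (Complex.I * ((c * d₀ : ℝ) : ℂ)) ^ (i + 1)
          - (Complex.exp (Complex.I * ((c * d₀ : ℝ) : ℂ)))⁻¹ ^ (i + 1)‖ ≤ 2 := by
        calc _ ≤ ‖Complex.exp (Complex.I * ((c * d₀ : ℝ) : ℂ)) ^ (i + 1)‖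
              + ‖(Complex.exp (Complex.I * ((c * d₀ : ℝ) : ℂ)))⁻¹ ^ (i + 1)‖ := norm_sub_le _ _
          _ = 2 := by
              rw [norm_pow, norm_pow, norm_inv]
              rw [show ‖Complex.exp (Complex.I * ((c * d₀ : ℝ) : ℂ))‖ = 1 from abs_exp_I_mul _]
              norm_num
      have h2 : ‖((rr c k κ i : ℝ) : ℂ) - ((rr c k (-κ) i : ℝ) : ℂ)‖
          ≤ D * |κ| / ((i : ℝ) + 1) ^ 2 := by
        rw [← Complex.ofReal_sub, Complex.norm_real, Real.norm_eq_abs]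
        exact (rr_diff hc hk0 hkc hκ i).trans_eq (by rw [hDdef])
      rw [norm_mul]
      exact (mul_le_mul h1 h2 (norm_nonneg _) (by norm_num)).trans_eq (by ring)
    have hsumd : Summable fun i : ℕ => ‖uu c d₀ k κ i - uu c d₀ k (-κ) i‖ :=
      Summable.of_nonneg_of_le (fun i => norm_nonneg _) hterm (hsummable_c _)
    have hUU : U - U' = ∑' i, (uu c d₀ k κ i - uu c d₀ k (-κ) i) := (Summable.tsum_sub hsum1 hsum2).symm
    rw [hUU]
    calc ‖∑' i, (uu c d₀ k κ i - uu c d₀ k (-κ) i)‖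
        ≤ ∑' i, ‖uu c d₀ k κ i - uu c d₀ k (-κ) i‖ := norm_tsum_le_tsum_norm hsumd
      _ ≤ ∑' i : ℕ, 2 * D * |κ| / ((i : ℝ) + 1) ^ 2 := Summable.tsum_le_tsum hterm hsumd (hsummable_c _)
      _ = 2 * D * |κ| * T := by
          rw [hTdef, ← tsum_mul_left]
          exact tsum_congr fun i => by ring
  have hE'1 : ‖E'‖ = 1 := abs_exp_I_mul _
  -- assemble
  have step1 : ‖(E - E') * ((z : ℝ) : ℂ)⁻¹‖ ≤ 2 * d₀ * |κ| * z0⁻¹ := by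
    rw [norm_mul]
    exact mul_le_mul habsE hzinv (norm_nonneg _) (by positivity)
  have step2 : ‖(E - E') * M‖ ≤ 2 * d₀ * |κ| * ‖M‖ := by
    rw [norm_mul]
    exact mul_le_mul_of_nonneg_right habsE (norm_nonneg _)
  have step3 : ‖(E - E') * U‖ ≤ 2 * d₀ * |κ| * (2 * A * T) := by
    rw [norm_mul]
    exact mul_le_mul habsE hUbound (norm_nonneg _) (by positivity)
  have step4 : ‖E' * (U - U')‖ ≤ 2 * D * |κ| * T := by
    rw [norm_mul, hE'1, one_mul]
    exact hUdiff
  calc ‖(E - E') * ((z : ℝ) : ℂ)⁻¹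
        + -Complex.I * ((E - E') * M + (E - E') * U + E' * (U - U'))‖
      ≤ ‖(E - E') * ((z : ℝ) : ℂ)⁻¹‖
        + ‖-Complex.I * ((E - E') * M + (E - E') * U + E' * (U - U'))‖ :=
        norm_add_le _ _
    _ = ‖(E - E') * ((z : ℝ) : ℂ)⁻¹‖
        + ‖(E - E') * M + (E - E') * U + E' * (U - U')‖ := by
        congr 1
        rw [neg_mul, norm_neg, norm_mul, Complex.norm_I, one_mul]
    _ ≤ ‖(E - E') * ((z : ℝ) : ℂ)⁻¹‖
        + (‖(E - E') * M‖ + ‖(E - E') * U‖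
          + ‖E' * (U - U')‖) := by
        have := norm_add_le ((E - E') * M + (E - E') * U) (E' * (U - U'))
        have h2 := norm_add_le ((E - E') * M) ((E - E') * U)
        linarith
    _ ≤ 2 * d₀ * |κ| * z0⁻¹ + (2 * d₀ * |κ| * ‖M‖ + 2 * d₀ * |κ| * (2 * A * T)
        + 2 * D * |κ| * T) := by linarith
    _ = (2 * d₀ * (z0⁻¹ + ‖M‖ + 2 * A * T) + 2 * D * T) * |κ| := by ring

lemma exists_M (c : ℝ) (hc : 0 < c) (w : ℂ) (hw : ‖w‖ = 1) (hw1 : w ≠ 1) :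
    ∃ M : ℂ, Tendsto (fun N : ℕ => ∑ i ∈ Finset.range N,
      ((w ^ (i + 1) + w⁻¹ ^ (i + 1)) * ((1 / (c * (i + 1)) : ℝ) : ℂ))) atTop (nhds M) := by
  have hw0 : w ≠ 0 := by intro h; rw [h] at hw; simp at hw
  have hgeom : ∀ (v : ℂ), ‖v‖ = 1 → v ≠ 1 → ∀ n : ℕ,
      ‖∑ i ∈ Finset.range n, v ^ (i + 1)‖ ≤ 2 / ‖v - 1‖ := by
    intro v hv hv1 n
    have hv1' : v - 1 ≠ 0 := sub_ne_zero.mpr hv1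
    have : ∑ i ∈ Finset.range n, v ^ (i + 1) = v * ((v ^ n - 1) / (v - 1)) := by
      rw [← geom_sum_eq hv1]
      rw [Finset.mul_sum]
      exact Finset.sum_congr rfl fun i _ => by ring
    rw [this]
    rw [norm_mul, norm_div]
    have hv' : ‖v‖ = 1 := hv
    rw [hv', one_mul]
    apply div_le_div_of_nonneg_right ?_ (by positivity)
    · calc ‖v ^ n - 1‖ ≤ ‖v ^ n‖ + ‖(1 : ℂ)‖ := norm_sub_le _ _
        _ = 2 := by rw [norm_pow]; rw [show ‖v‖ = 1 from hv]; norm_num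
  have hwi : ‖w⁻¹‖ = 1 := by rw [norm_inv, hw]; norm_num
  have hwi1 : w⁻¹ ≠ 1 := by
    intro h; apply hw1; field_simp at h; exact h.symm
  have hwd : ‖w⁻¹ - 1‖ = ‖w - 1‖ := by
    have : w⁻¹ - 1 = (1 - w) / w := by field_simp
    rw [this, norm_div, norm_sub_rev]
    have hw' : ‖w‖ = 1 := hw
    rw [hw', div_one]
  set f : ℕ → ℝ := fun i => 1 / (c * (i + 1)) with hf
  set z : ℕ → ℂ := fun i => w ^ (i + 1) + w⁻¹ ^ (i + 1) with hz
  have hanti : Antitone f := by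
    intro i j hij
    apply div_le_div_of_nonneg_left (by norm_num) (by positivity)
    have : (i : ℝ) + 1 ≤ (j : ℝ) + 1 := by exact_mod_cast by omega
    nlinarith
  have hf0 : Tendsto f atTop (nhds 0) := by
    have h1 : Tendsto (fun i : ℕ => (1 : ℝ) / (i + 1)) atTop (nhds 0) :=
      tendsto_one_div_add_atTop_nhds_zero_nat
    have := h1.const_mul (1 / c)
    rw [mul_zero] at this
    refine this.congr fun i => ?_
    simp only [hf]
    field_simp
  have hbdd : ∀ n, ‖∑ i ∈ Finset.range n, z i‖ ≤ 4 / ‖w - 1‖ := by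
    intro n
    calc ‖∑ i ∈ Finset.range n, z i‖
        = ‖(∑ i ∈ Finset.range n, w ^ (i + 1)) + ∑ i ∈ Finset.range n, w⁻¹ ^ (i + 1)‖ := by
          rw [← Finset.sum_add_distrib]
      _ ≤ ‖∑ i ∈ Finset.range n, w ^ (i + 1)‖ + ‖∑ i ∈ Finset.range n, w⁻¹ ^ (i + 1)‖ :=
          norm_add_le _ _
      _ ≤ 2 / ‖w - 1‖ + 2 / ‖w⁻¹ - 1‖ := add_le_add (hgeom w hw hw1 n) (hgeom w⁻¹ hwi hwi1 n)
      _ = 4 / ‖w - 1‖ := by rw [hwd]; ring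
  have hcs : CauchySeq fun n => ∑ i ∈ Finset.range n, f i • z i :=
    hanti.cauchySeq_series_mul_of_tendsto_zero_of_bounded hf0 hbdd
  obtain ⟨M, hM⟩ := cauchySeq_tendsto_of_complete hcs
  refine ⟨M, hM.congr fun N => Finset.sum_congr rfl fun i _ => ?_⟩
  rw [Complex.real_smul, mul_comm]

/-- Fix `d > 0`, `d₀ ∈ (0,d)` and `k ∈ (0, 2π/d)`. There are
`δ, C > 0` such that for every `|κ| ≤ δ` (so `(κ,k) ∈ D₁`), the symmetric partial
sums `-(i/d) Σ_{n=-N}^N e^{±iκ_n d₀}/ζ_n` converge to limits `b⁺(κ)`, `b⁻(κ)` and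
`|b⁺(κ) − b⁻(κ)| ≤ C|κ|`. -/
theorem stmt_12 (d d₀ k : ℝ) (hd : 0 < d) (hd₀ : 0 < d₀) (hd₀' : d₀ < d)
    (hk0 : 0 < k) (hk1 : k < 2 * π / d) :
    ∃ δ > 0, ∃ C > 0, ∀ κ : ℝ, |κ| ≤ δ →
      (κ, k) ∈ D1 d ∧
      ∃ bp bm : ℂ,
        Tendsto (fun N : ℕ =>
            (-Complex.I / (d : ℂ)) * ∑ n ∈ Finset.Icc (-(N : ℤ)) (N : ℤ),
              Complex.exp (Complex.I * ((kapN d κ n * d₀ : ℝ) : ℂ)) / zetaN d k κ n)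
          atTop (nhds bp) ∧
        Tendsto (fun N : ℕ =>
            (-Complex.I / (d : ℂ)) * ∑ n ∈ Finset.Icc (-(N : ℤ)) (N : ℤ),
              Complex.exp (-(Complex.I * ((kapN d κ n * d₀ : ℝ) : ℂ))) / zetaN d k κ n)
          atTop (nhds bm) ∧
        ‖bp - bm‖ ≤ C * |κ| := by
  have hπ := Real.pi_pos
  set c : ℝ := 2 * π / d with hcdef
  have hc : 0 < c := by positivity
  have hkc : k < c := hk1
  set w : ℂ := Complex.exp (Complex.I * ((c * d₀ : ℝ) : ℂ)) with hwdef
  have hw : ‖w‖ = 1 := abs_exp_I_mul _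
  have hcd₀1 : 0 < c * d₀ := by positivity
  have hcd₀2 : c * d₀ < 2 * π := by
    rw [hcdef, div_mul_eq_mul_div, div_lt_iff₀ hd]
    nlinarith
  have hw1 : w ≠ 1 := by
    intro h
    rw [hwdef, Complex.exp_eq_one_iff] at h
    obtain ⟨n, hn⟩ := h
    have h2 : Complex.I * ((c * d₀ : ℝ) : ℂ) = Complex.I * ((n : ℂ) * (2 * (π : ℂ))) := by
      rw [hn]; ring
    have h3 : ((c * d₀ : ℝ) : ℂ) = ((n : ℂ) * (2 * (π : ℂ))) :=
      mul_left_cancel₀ Complex.I_ne_zero h2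
    have h4 : (c * d₀ : ℝ) = (n : ℝ) * (2 * π) := by exact_mod_cast h3
    rcases le_or_gt (n : ℝ) 0 with h5 | h5
    · nlinarith
    · have h5' : (0 : ℤ) < n := by exact_mod_cast h5
      have h6 : (1 : ℝ) ≤ (n : ℝ) := by exact_mod_cast h5'
      nlinarith
  obtain ⟨M, hM⟩ := exists_M c hc w hw hw1
  set δ' : ℝ := min (k / 2) ((c - k) / 2) with hδdef
  have hδpos : 0 < δ' := lt_min (by linarith) (by linarith)
  have hδk2 : δ' ≤ k / 2 := min_le_left _ _
  have hδc2 : δ' ≤ (c - k) / 2 := min_le_right _ _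
  set T : ℝ := ∑' i : ℕ, 1 / ((i : ℝ) + 1) ^ 2 with hTdef
  have hT0 : 0 ≤ T := tsum_nonneg fun i => by positivity
  set C0 : ℝ := 2 * d₀ * ((Real.sqrt (k ^ 2 - δ' ^ 2))⁻¹ + ‖M‖
      + 2 * ((2 * k ^ 2 + c * k) / (Real.sqrt ((c - k) / 2 * c / 2) * c ^ 2)) * T)
    + 2 * (2 * c / (Real.sqrt ((c - k) / 2 * c / 2)) ^ 3) * T with hC0def
  have hC0nn : 0 ≤ C0 := by
    rw [hC0def]
    have h1 : (0:ℝ) ≤ (Real.sqrt (k ^ 2 - δ' ^ 2))⁻¹ := by positivity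
    have h2 : (0:ℝ) ≤ 2 * ((2 * k ^ 2 + c * k) / (Real.sqrt ((c - k) / 2 * c / 2) * c ^ 2)) := by
      positivity
    have h3 : (0:ℝ) ≤ 2 * (2 * c / (Real.sqrt ((c - k) / 2 * c / 2)) ^ 3) := by positivity
    have h4 := norm_nonneg M
    nlinarith [mul_nonneg h2 hT0, mul_nonneg h3 hT0]
  have hCpos : 0 < C0 / d + 1 := by
    have : 0 ≤ C0 / d := div_nonneg hC0nn hd.le
    linarith
  refine ⟨δ', hδpos, C0 / d + 1, hCpos, fun κ hκ => ?_⟩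
  have hκ' : |(-κ)| ≤ δ' := by rwa [abs_neg]
  -- D1 membership
  have hmem : (κ, k) ∈ D1 d := by
    refine ⟨?_, hk0, ?_⟩
    · have : c / 2 = π / d := by rw [hcdef]; ring
      simp only []
      linarith [hκ, hδk2, hkc]
    · intro n hn
      have h1 : (1 : ℝ) ≤ |(n : ℝ)| := by exact_mod_cast Int.one_le_abs hn
      have h2 : |2 * π * (n : ℝ) / d| = c * |(n : ℝ)| := by
        rw [show 2 * π * (n : ℝ) / d = c * (n : ℝ) by rw [hcdef]; ring, abs_mul, abs_of_pos hc]
      have h3 : |2 * π * (n : ℝ) / d| ≤ |κ + 2 * π * (n : ℝ) / d| + |κ| := by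
        calc |2 * π * (n : ℝ) / d| = |(κ + 2 * π * (n : ℝ) / d) + (-κ)| := by ring_nf
          _ ≤ |κ + 2 * π * (n : ℝ) / d| + |(-κ)| := abs_add_le _ _
          _ = |κ + 2 * π * (n : ℝ) / d| + |κ| := by rw [abs_neg]
      have h4 : c * 1 ≤ c * |(n : ℝ)| := mul_le_mul_of_nonneg_left h1 hc.le
      simp only []
      linarith [hκ, h2 ▸ h3]
  refine ⟨hmem, (-Complex.I / (d : ℂ)) * GG c d₀ k M κ,
    (-Complex.I / (d : ℂ)) * GG c d₀ k M (-κ), ?_, ?_, ?_⟩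
  · exact (key_tendsto d d₀ k hd hk0 hk1 M hM κ hκ).const_mul _
  · have hT := (key_tendsto d d₀ k hd hk0 hk1 M hM (-κ) hκ').const_mul (-Complex.I / (d : ℂ))
    apply hT.congr
    intro N
    rw [minus_eq_plus d d₀ k κ N]
  · have h1 : (-Complex.I / (d : ℂ)) * GG c d₀ k M κ - (-Complex.I / (d : ℂ)) * GG c d₀ k M (-κ)
        = (-Complex.I / (d : ℂ)) * (GG c d₀ k M κ - GG c d₀ k M (-κ)) := by ring
    rw [h1, norm_mul, norm_div, norm_neg, Complex.norm_I, Complex.norm_real, Real.norm_eq_abs,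
      abs_of_pos hd]
    have h2 := GG_diff c d₀ k hc hd₀ hk0 hkc M κ hκ
    calc 1 / d * ‖GG c d₀ k M κ - GG c d₀ k M (-κ)‖
        ≤ 1 / d * (C0 * |κ|) := by
          apply mul_le_mul_of_nonneg_left _ (by positivity)
          exact h2
      _ = C0 / d * |κ| := by ring
      _ ≤ (C0 / d + 1) * |κ| := by nlinarith [abs_nonneg κ]
end
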